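/- Let E be a finite-dimensional real inner product space and let f : E → ℝ be a convex Lipschitz function. Then: (a) for every unit vector v ∈ E one has slope_f(v) + slope_f(−v) ≥ 0; in particular slope_f(v) and slope_f(−v) cannot both be negative. (b) If there exists a unit vector v with slope_f(v) < 0, then there is a unique unit vector ξ ∈ E at which slope_f attains its minimum over the unit sphere of E. -/

import Mathlib

open Filter

/-- (a) For a convex Lipschitz function `f` on a finite-dimensional real inner
product space, the asymptotic slopes in opposite unit directions satisfy
`slope_f(v) + slope_f(-v) ≥ 0`; (b) if there is a unit direction of negative
asymptotic slope, then the slope function has a unique minimum on the unit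
sphere. -/
theorem asymptotic_slope_opposite_and_unique_min
    {E : Type*} [NormedAddCommGroup E] [InnerProductSpace ℝ E]
    [FiniteDimensional ℝ E]
    (f : E → ℝ) (hconv : ConvexOn ℝ Set.univ f)
    (C : NNReal) (hlip : LipschitzWith C f)
    (s : E → ℝ)
    (hs : ∀ v : E, Tendsto (fun t : ℝ => f (t • v) / t) atTop (nhds (s v))) :
    (∀ v : E, ‖v‖ = 1 → 0 ≤ s v + s (-v)) ∧
    ((∃ v : E, ‖v‖ = 1 ∧ s v < 0) →
      ∃! ξ : E, ‖ξ‖ = 1 ∧ ∀ η : E, ‖η‖ = 1 → s ξ ≤ s η) := by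
  have hpos : ∀ᶠ t : ℝ in atTop, (0 : ℝ) < t := eventually_gt_atTop 0
  -- midpoint convexity of s
  have hmid : ∀ x y : E, s ((1/2 : ℝ) • x + (1/2 : ℝ) • y) ≤ (1/2) * s x + (1/2) * s y := by
    intro x y
    have h1 := hs ((1/2 : ℝ) • x + (1/2 : ℝ) • y)
    have h2 : Tendsto (fun t : ℝ => (1/2) * (f (t • x) / t) + (1/2) * (f (t • y) / t))
        atTop (nhds ((1/2) * s x + (1/2) * s y)) :=
      ((hs x).const_mul _).add ((hs y).const_mul _)
    refine le_of_tendsto_of_tendsto h1 h2 ?_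
    filter_upwards [hpos] with t ht
    have key : f (t • ((1/2 : ℝ) • x + (1/2 : ℝ) • y))
        ≤ (1/2) * f (t • x) + (1/2) * f (t • y) := by
      have := hconv.2 (Set.mem_univ (t • x)) (Set.mem_univ (t • y))
        (by norm_num : (0:ℝ) ≤ 1/2) (by norm_num : (0:ℝ) ≤ 1/2) (by norm_num)
      simpa [smul_add, smul_smul, mul_comm] using this
    have hrw : (1/2) * (f (t • x) / t) + (1/2) * (f (t • y) / t)
        = ((1/2) * f (t • x) + (1/2) * f (t • y)) / t := by ring
    rw [hrw, div_le_div_iff₀ ht ht]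
    nlinarith
  -- positive homogeneity of s
  have hhom : ∀ (c : ℝ), 0 < c → ∀ v : E, s (c • v) = c * s v := by
    intro c hc v
    have hcomp : Tendsto (fun t : ℝ => c * (f ((t * c) • v) / (t * c)))
        atTop (nhds (c * s v)) := by
      have h1 : Tendsto (fun t : ℝ => t * c) atTop atTop :=
        Tendsto.atTop_mul_const hc tendsto_id
    -- compose
      exact ((hs v).comp h1).const_mul c
    have heq : ∀ᶠ t : ℝ in atTop, c * (f ((t * c) • v) / (t * c)) = f (t • (c • v)) / t := by
      filter_upwards [hpos] with t ht
      rw [smul_smul]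
      field_simp
    exact tendsto_nhds_unique (hs (c • v)) (hcomp.congr' heq)
  -- Lipschitz bound for s
  have hsub : ∀ x y : E, s x - s y ≤ C * ‖x - y‖ := by
    intro x y
    have h1 : Tendsto (fun t : ℝ => f (t • x) / t - f (t • y) / t)
        atTop (nhds (s x - s y)) := (hs x).sub (hs y)
    refine le_of_tendsto h1 ?_
    filter_upwards [hpos] with t ht
    have hd : f (t • x) - f (t • y) ≤ C * (t * ‖x - y‖) := by
      have h := hlip.dist_le_mul (t • x) (t • y)
      rw [dist_eq_norm, dist_eq_norm] at h
      have hn : ‖t • x - t • y‖ = t * ‖x - y‖ := by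
        rw [← smul_sub, norm_smul, Real.norm_eq_abs, abs_of_pos ht]
      rw [hn] at h
      exact (le_abs_self _).trans h
    rw [div_sub_div_same, div_le_iff₀ ht]
    calc f (t • x) - f (t • y) ≤ C * (t * ‖x - y‖) := hd
      _ = C * ‖x - y‖ * t := by ring
  -- part (a)
  have parta : ∀ v : E, 0 ≤ s v + s (-v) := by
    intro v
    have h1 : Tendsto (fun t : ℝ => 2 * f 0 / t) atTop (nhds 0) := by
      simpa using Tendsto.const_div_atTop (tendsto_id) (2 * f 0)
    have h2 : Tendsto (fun t : ℝ => f (t • v) / t + f (t • (-v)) / t)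
        atTop (nhds (s v + s (-v))) := (hs v).add (hs (-v))
    refine le_of_tendsto_of_tendsto h1 h2 ?_
    filter_upwards [hpos] with t ht
    have key : f 0 ≤ (1/2) * f (t • v) + (1/2) * f (t • (-v)) := by
      have := hconv.2 (Set.mem_univ (t • v)) (Set.mem_univ (t • (-v)))
        (by norm_num : (0:ℝ) ≤ 1/2) (by norm_num : (0:ℝ) ≤ 1/2) (by norm_num)
      simpa [smul_neg, smul_smul] using this
    rw [← add_div, div_le_div_iff₀ ht ht]
    nlinarith
  refine ⟨fun v _ => parta v, ?_⟩
  rintro ⟨v, hv, hsv⟩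
  -- s is continuous
  have hlips : LipschitzWith C s := by
    refine LipschitzWith.of_dist_le_mul fun x y => ?_
    rw [dist_eq_norm, dist_eq_norm, Real.norm_eq_abs, abs_sub_le_iff]
    exact ⟨hsub x y, by simpa [norm_sub_rev] using hsub y x⟩
  have hvmem : v ∈ Metric.sphere (0 : E) 1 := by simpa using hv
  obtain ⟨ξ, hξmem, hξmin⟩ := (isCompact_sphere (0 : E) 1).exists_isMinOn
    ⟨v, hvmem⟩ hlips.continuous.continuousOn
  have hξ1 : ‖ξ‖ = 1 := by simpa using hξmem
  have hmin : ∀ η : E, ‖η‖ = 1 → s ξ ≤ s η := by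
    intro η hη
    exact hξmin (by simpa using hη)
  have hm_neg : s ξ < 0 := lt_of_le_of_lt (hmin v hv) hsv
  refine ⟨ξ, ⟨hξ1, hmin⟩, ?_⟩
  rintro y ⟨hy1, hymin⟩
  by_contra hne
  have heq : s y = s ξ := le_antisymm (hymin ξ hξ1) (hmin y hy1)
  -- y ≠ -ξ
  have hne' : ξ ≠ -y := by
    intro h
    have h2 := parta y
    rw [← h] at h2
    linarith
  have hw0 : ξ + y ≠ 0 := fun h => hne' (by
    have : ξ = -y := by linear_combination (norm := module) h
    exact this)
  have hwpos : (0:ℝ) < ‖ξ + y‖ := norm_pos_iff.mpr hw0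
  have hinner : inner ℝ ξ y < (1 : ℝ) := by
    rcases lt_or_eq_of_le ((real_inner_le_norm ξ y).trans (by rw [hξ1, hy1, one_mul])) with h | h
    · exact h
    · exact absurd (((inner_eq_one_iff_of_norm_eq_one hξ1 hy1).mp h).symm) hne
  have hwlt : ‖ξ + y‖ < 2 := by
    have hsq : ‖ξ + y‖ ^ 2 = 2 + 2 * inner ℝ ξ y := by
      rw [← real_inner_self_eq_norm_sq, inner_add_add_self,
        real_inner_self_eq_norm_sq, real_inner_self_eq_norm_sq, hξ1, hy1,
        real_inner_comm y ξ]
      ring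
    nlinarith [norm_nonneg (ξ + y)]
  -- s (ξ + y) ≤ 2 * s ξ
  have hhalf : s ((1/2 : ℝ) • ξ + (1/2 : ℝ) • y) ≤ s ξ := by
    have := hmid ξ y
    rw [heq] at this
    linarith
  have hsw : s (ξ + y) ≤ 2 * s ξ := by
    have h2 : (ξ + y) = (2 : ℝ) • ((1/2 : ℝ) • ξ + (1/2 : ℝ) • y) := by
      module
    rw [h2, hhom 2 (by norm_num)]
    linarith
  set u := ‖ξ + y‖⁻¹ • (ξ + y) with hu
  have hu1 : ‖u‖ = 1 := by
    rw [hu, norm_smul, Real.norm_eq_abs, abs_of_pos (inv_pos.mpr hwpos),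
      inv_mul_cancel₀ hwpos.ne']
  have hsu : s u = ‖ξ + y‖⁻¹ * s (ξ + y) := hhom _ (inv_pos.mpr hwpos) _
  have hlt : s u < s ξ := by
    rw [hsu]
    have h1 : ‖ξ + y‖⁻¹ * s (ξ + y) ≤ ‖ξ + y‖⁻¹ * (2 * s ξ) :=
      mul_le_mul_of_nonneg_left hsw (inv_nonneg.mpr hwpos.le)
    have h2 : ‖ξ + y‖⁻¹ * (2 * s ξ) < s ξ := by
      rw [inv_mul_lt_iff₀ hwpos]
      nlinarith
    linarith
  exact absurd (hmin u hu1) (not_le.mpr hlt)
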